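/- Let k be a commutative ring and V a k-module. For n ≥ 1 let C^n(V,V) denote the k-module of n-multilinear maps V^n → V. For f ∈ C^p(V,V), g ∈ C^q(V,V) and 1 ≤ i ≤ p, define f∘_i g ∈ C^{p+q−1}(V,V) by (f∘_i g)(x_1,…,x_{p+q−1}) = f(x_1,…,x_{i−1}, g(x_i,…,x_{i+q−1}), x_{i+q},…,x_{p+q−1}), and set f∘g := Σ_{i=1}^{p} f∘_i g ∈ C^{p+q−1}(V,V). Then for all f ∈ C^p(V,V), g ∈ C^q(V,V), h ∈ C^r(V,V): f∘(g∘h) − (f∘g)∘h = f∘(h∘g) − (f∘h)∘g. Consequently ⊕_{n≥1} C^n(V,V) equipped with ∘ is a pre-Lie algebra over k. -/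

import Mathlib

namespace GerstenhaberComp

variable {k V : Type*} [CommRing k] [AddCommGroup V] [Module k V]

/-- `C k V n` is the `k`-module of `n`-multilinear maps from `V` to `V`. -/
abbrev C (k V : Type*) [CommRing k] [AddCommGroup V] [Module k V] (n : ℕ) :=
  MultilinearMap k (fun _ : Fin n => V) V

/-- The tuple of arguments fed to `f` in `(f ∘ᵢ g) x`: the arguments of `x` outside the block
of `g`, with the value `v` inserted in position `i`. -/
def insertArgs {p q : ℕ} (i : Fin (p + 1)) (x : Fin (p + 1 + q) → V) (v : V) :
    Fin (p + 1) → V := fun j =>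
  if h : j.1 < i.1 then x ⟨j.1, by omega⟩
  else if j.1 = i.1 then v
  else x ⟨j.1 + q, by omega⟩

/-- The block of `q + 1` consecutive arguments of `x` starting at position `i`,
fed to `g` in `(f ∘ᵢ g) x`. -/
def gArgs {p q : ℕ} (i : Fin (p + 1)) (x : Fin (p + 1 + q) → V) : Fin (q + 1) → V :=
  fun l => x ⟨i.1 + l.1, by omega⟩

theorem gArgs_update {p q : ℕ} [DecidableEq (Fin (p + 1 + q))] (i : Fin (p + 1)) (x : Fin (p + 1 + q) → V)
    (m : Fin (p + 1 + q)) (hm : m.1 < i.1 ∨ i.1 + q < m.1) (v : V) :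
    gArgs i (Function.update x m v) = gArgs i x := by
  funext l
  have h : (⟨i.1 + l.1, by omega⟩ : Fin (p + 1 + q)) ≠ m := by
    simp only [ne_eq, Fin.ext_iff]
    omega
  simp [gArgs, Function.update_of_ne h]

theorem insertArgs_update_outside {p q : ℕ} [DecidableEq (Fin (p + 1 + q))] (i : Fin (p + 1)) (x : Fin (p + 1 + q) → V)
    (m : Fin (p + 1 + q)) (hm : m.1 < i.1 ∨ i.1 + q < m.1) (v w : V) :
    insertArgs i (Function.update x m v) w =
      Function.update (insertArgs i x w)
        ⟨if m.1 < i.1 then m.1 else m.1 - q, by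
          have h1 := m.2; have h2 := i.2; split_ifs <;> omega⟩ v := by
  funext j
  simp only [insertArgs, Function.update_apply, Fin.ext_iff]
  split_ifs <;> simp_all <;> first | omega | (congr 1; omega) | (exfalso; omega)

theorem insertArgs_update_inside {p q : ℕ} [DecidableEq (Fin (p + 1 + q))] (i : Fin (p + 1)) (x : Fin (p + 1 + q) → V)
    (m : Fin (p + 1 + q)) (hm : i.1 ≤ m.1 ∧ m.1 ≤ i.1 + q) (v w : V) :
    insertArgs i (Function.update x m v) w = insertArgs i x w := by
  funext j
  simp only [insertArgs, Function.update_apply, Fin.ext_iff]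
  split_ifs <;> simp_all <;> first | omega | (congr 1; omega) | (exfalso; omega)

theorem gArgs_update_inside {p q : ℕ} [DecidableEq (Fin (p + 1 + q))] (i : Fin (p + 1)) (x : Fin (p + 1 + q) → V)
    (m : Fin (p + 1 + q)) (hm : i.1 ≤ m.1 ∧ m.1 ≤ i.1 + q) (v : V) :
    gArgs i (Function.update x m v) =
      Function.update (gArgs i x) ⟨m.1 - i.1, by omega⟩ v := by
  funext l
  simp only [gArgs, Function.update_apply, Fin.ext_iff]
  split_ifs <;> first | rfl | (congr 1; omega) | (exfalso; omega)

theorem insertArgs_eq_update {p q : ℕ} (i : Fin (p + 1)) (x : Fin (p + 1 + q) → V) (v w : V) :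
    insertArgs i x w = Function.update (insertArgs i x v) i w := by
  funext j
  simp only [insertArgs, Function.update_apply, Fin.ext_iff]
  split_ifs <;> first | rfl | omega

/-- The composition `f ∘ᵢ g` at position `i`:
`(f ∘ᵢ g)(x_1, …, x_{p+q+1}) = f (x_1, …, x_{i-1}, g (x_i, …, x_{i+q}), x_{i+q+1}, …)`.
(Here `f` has `p + 1` arguments, `g` has `q + 1` arguments, and the result has
`p + 1 + q = (p + 1) + (q + 1) - 1` arguments.) -/
def compAt {p q : ℕ} (f : C k V (p + 1)) (g : C k V (q + 1)) (i : Fin (p + 1)) :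
    C k V (p + 1 + q) where
  toFun x := f (insertArgs i x (g (gArgs i x)))
  map_update_add' := by
    intro dec x m a b
    try dsimp only
    rcases Nat.lt_or_ge m.1 i.1 with hm | hm'
    · simp only [gArgs_update i x m (Or.inl hm), insertArgs_update_outside i x m (Or.inl hm),
        f.map_update_add]
    · rcases Nat.lt_or_ge (i.1 + q) m.1 with hm | hm
      · simp only [gArgs_update i x m (Or.inr hm), insertArgs_update_outside i x m (Or.inr hm),
          f.map_update_add]
      · have hin : i.1 ≤ m.1 ∧ m.1 ≤ i.1 + q := ⟨hm', hm⟩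
        simp only [insertArgs_update_inside i x m hin, gArgs_update_inside i x m hin,
          g.map_update_add]
        rw [insertArgs_eq_update i x
            (g (Function.update (gArgs i x) ⟨m.1 - i.1, by have := m.2; have := i.2; omega⟩ a)),
          f.map_update_add, ← insertArgs_eq_update, ← insertArgs_eq_update]
  map_update_smul' := by
    intro dec x m r a
    try dsimp only
    rcases Nat.lt_or_ge m.1 i.1 with hm | hm'
    · simp only [gArgs_update i x m (Or.inl hm), insertArgs_update_outside i x m (Or.inl hm),
        f.map_update_smul]
    · rcases Nat.lt_or_ge (i.1 + q) m.1 with hm | hm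
      · simp only [gArgs_update i x m (Or.inr hm), insertArgs_update_outside i x m (Or.inr hm),
          f.map_update_smul]
      · have hin : i.1 ≤ m.1 ∧ m.1 ≤ i.1 + q := ⟨hm', hm⟩
        simp only [insertArgs_update_inside i x m hin, gArgs_update_inside i x m hin,
          g.map_update_smul]
        rw [insertArgs_eq_update i x
            (g (Function.update (gArgs i x) ⟨m.1 - i.1, by have := m.2; have := i.2; omega⟩ a)),
          f.map_update_smul, ← insertArgs_eq_update]

/-- The Gerstenhaber circle product `f ∘ g = Σ_{i=1}^{p+1} f ∘ᵢ g`. -/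
def comp {p q : ℕ} (f : C k V (p + 1)) (g : C k V (q + 1)) : C k V (p + 1 + q) :=
  ∑ i : Fin (p + 1), compAt f g i

/-- Reindexing a multilinear map along an equality of arities. -/
def castC {m n : ℕ} (h : m = n) (f : C k V m) : C k V n :=
  f.domDomCongr (finCongr h)

section PreLieAux

variable {k V : Type*} [CommRing k] [AddCommGroup V] [Module k V]

theorem castC_apply {m n : ℕ} (e : m = n) (F : C k V m) (w : Fin n → V) :
    castC e F w = F (fun l => w (finCongr e l)) := rfl

theorem comp_apply {p q : ℕ} (f : C k V (p + 1)) (g : C k V (q + 1)) (x : Fin (p + 1 + q) → V) :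
    comp f g x = ∑ i : Fin (p + 1), f (insertArgs i x (g (gArgs i x))) := by
  rw [comp, MultilinearMap.sum_apply]
  rfl

/-- Nested term: `g ∘ⱼ h` plugged into slot `i` of `f`, evaluated at arguments `y`. -/
def Nval {p q r : ℕ} (f : C k V (p + 1)) (g : C k V (q + 1)) (h : C k V (r + 1))
    (y : ℕ → V) (i : Fin (p + 1)) (j : Fin (q + 1)) : V :=
  f fun s => if s.1 < i.1 then y s.1 else if s.1 = i.1 then
    g (fun t => if t.1 < j.1 then y (i.1 + t.1) else if t.1 = j.1 then
        h (fun u => y (i.1 + j.1 + u.1)) else y (i.1 + t.1 + r))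
    else y (s.1 + q + r)

/-- Disjoint term: `g` plugged into slot `a` and `h` into slot `b` of `f` (for `a ≠ b`),
evaluated at arguments `y`. -/
def Dval {p q r : ℕ} (f : C k V (p + 1)) (g : C k V (q + 1)) (h : C k V (r + 1))
    (y : ℕ → V) (a b : Fin (p + 1)) : V :=
  f fun s =>
    if s = a then g (fun t => y (a.1 + (if b.1 < a.1 then r else 0) + t.1))
    else if s = b then h (fun t => y (b.1 + (if a.1 < b.1 then q else 0) + t.1))
    else y (s.1 + (if a.1 < s.1 then q else 0) + (if b.1 < s.1 then r else 0))

theorem Dval_comm {p q r : ℕ} (f : C k V (p + 1)) (g : C k V (q + 1)) (h : C k V (r + 1))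
    (y : ℕ → V) (a b : Fin (p + 1)) (hab : a ≠ b) :
    Dval f g h y a b = Dval f h g y b a := by
  unfold Dval
  congr 1
  funext s
  rcases eq_or_ne s a with rfl | hsa
  · simp [hab]
  · rcases eq_or_ne s b with rfl | hsb
    · simp [hsa]
    · simp only [if_neg hsa, if_neg hsb]
      congr 1
      omega

end PreLieAux

theorem sum_insert_eq {p q : ℕ} (f : C k V (p + 1)) (x : Fin (p + 1 + q) → V) (i : Fin (p + 1))
    {α : Type*} (s : Finset α) (v : α → V) :
    f (insertArgs i x (∑ a ∈ s, v a)) = ∑ a ∈ s, f (insertArgs i x (v a)) := by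
  classical
  rw [insertArgs_eq_update i x 0, MultilinearMap.map_update_sum]
  exact Finset.sum_congr rfl fun a _ => by rw [← insertArgs_eq_update]

theorem LA {p q r N : ℕ} (f : C k V (p + 1)) (g : C k V (q + 1)) (h : C k V (r + 1))
    (e1 : q + 1 + r = q + r + 1) (e2 : p + 1 + (q + r) = N) (y : ℕ → V) :
    castC e2 (comp f (castC e1 (comp g h))) (fun l => y l.1) =
      ∑ i : Fin (p + 1), ∑ j : Fin (q + 1), Nval f g h y i j := by
  rw [castC_apply]
  have hx : (fun l : Fin (p + 1 + (q + r)) => (fun l : Fin N => y l.1) (finCongr e2 l)) =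
      (fun l : Fin (p + 1 + (q + r)) => y l.1) := rfl
  rw [hx, comp_apply]
  refine Finset.sum_congr rfl fun i _ => ?_
  have hG : (castC e1 (comp g h)) (gArgs i (fun l : Fin (p + 1 + (q + r)) => y l.1)) =
      ∑ j : Fin (q + 1), g (insertArgs j (fun l : Fin (q + 1 + r) => y (i.1 + l.1))
        (h (gArgs j (fun l : Fin (q + 1 + r) => y (i.1 + l.1))))) := by
    rw [castC_apply]
    have h2 : (fun l : Fin (q + 1 + r) =>
        gArgs i (fun l : Fin (p + 1 + (q + r)) => y l.1) (finCongr e1 l)) =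
        (fun l : Fin (q + 1 + r) => y (i.1 + l.1)) := rfl
    rw [h2, comp_apply]
  rw [hG, sum_insert_eq]
  refine Finset.sum_congr rfl fun j _ => ?_
  unfold Nval
  congr 1
  funext s
  simp only [insertArgs, gArgs]
  split_ifs with h1 h2
  · rfl
  · congr 1
    funext t
    simp only [insertArgs, gArgs]
    split_ifs with h3 h4
    · rfl
    · congr 1
      funext u
      simp only [gArgs]
      congr 1
      omega
    · congr 1
      omega
  · congr 1
    omega

/-- The argument vector obtained by inserting `h`'s value at block `m` into `y`,
restricted to `p + 1 + q` arguments. -/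
def Wargs {p q r : ℕ} (h : C k V (r + 1)) (y : ℕ → V) (m : Fin (p + q + 1)) :
    Fin (p + 1 + q) → V := fun l =>
  insertArgs m (fun l : Fin (p + q + 1 + r) => y l.1)
    (h (gArgs m (fun l : Fin (p + q + 1 + r) => y l.1))) ⟨l.1, by omega⟩

/-- One term of `(f ∘ᵢ g) ∘ₘ h`. -/
def Tval {p q r : ℕ} (f : C k V (p + 1)) (g : C k V (q + 1)) (h : C k V (r + 1))
    (y : ℕ → V) (i : Fin (p + 1)) (m : Fin (p + q + 1)) : V :=
  f (insertArgs i (Wargs h y m) (g (gArgs i (Wargs h y m))))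

theorem LB {p q r N : ℕ} (f : C k V (p + 1)) (g : C k V (q + 1)) (h : C k V (r + 1))
    (e1 : p + 1 + q = p + q + 1) (e2 : p + q + 1 + r = N) (y : ℕ → V) :
    castC e2 (comp (castC e1 (comp f g)) h) (fun l => y l.1) =
      (∑ i : Fin (p + 1), ∑ j : Fin (q + 1), Nval f g h y i j)
      + ∑ i : Fin (p + 1), ∑ b ∈ Finset.univ.filter (fun b : Fin (p + 1) => b ≠ i),
          Dval f g h y i b := by
  classical
  rw [castC_apply]
  have hx : (fun l : Fin (p + q + 1 + r) => (fun l : Fin N => y l.1) (finCongr e2 l)) =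
      (fun l : Fin (p + q + 1 + r) => y l.1) := rfl
  rw [hx, comp_apply]
  have step1 : ∀ m : Fin (p + q + 1),
      (castC e1 (comp f g)) (insertArgs m (fun l : Fin (p + q + 1 + r) => y l.1)
        (h (gArgs m (fun l : Fin (p + q + 1 + r) => y l.1)))) =
      ∑ i : Fin (p + 1), Tval f g h y i m := by
    intro m
    rw [castC_apply, comp_apply]
    rfl
  rw [Finset.sum_congr rfl fun m _ => step1 m, Finset.sum_comm, ← Finset.sum_add_distrib]
  refine Finset.sum_congr rfl fun i _ => ?_
  rw [← Finset.sum_filter_add_sum_filter_not Finset.univ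
    (fun m : Fin (p + q + 1) => i.1 ≤ m.1 ∧ m.1 ≤ i.1 + q)]
  congr 1
  · -- inside block: nested terms
    refine Finset.sum_nbij' (fun m => (⟨min (m.1 - i.1) q, by omega⟩ : Fin (q + 1)))
      (fun j => (⟨i.1 + j.1, by omega⟩ : Fin (p + q + 1)))
      (fun m _ => Finset.mem_univ _)
      (fun j _ => by
        simp only [Finset.mem_filter, Finset.mem_univ, true_and, Fin.val_mk]
        omega)
      (fun m hm => by
        simp only [Finset.mem_filter, Finset.mem_univ, true_and] at hm
        apply Fin.ext
        simp only [Fin.val_mk]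
        omega)
      (fun j _ => by
        apply Fin.ext
        simp only [Fin.val_mk]
        omega)
      (fun m hm => ?_)
    simp only [Finset.mem_filter, Finset.mem_univ, true_and] at hm
    unfold Tval Nval
    congr 1
    funext s
    simp only [insertArgs, Wargs, gArgs, Fin.val_mk]
    split_ifs <;>
      first
      | rfl
      | (exfalso; omega)
      | (congr 1; omega)
      | (congr 1; funext u; simp only [insertArgs, Wargs, gArgs, Fin.val_mk];
         first
         | (congr 1; omega)
         | (split_ifs <;>
             first
             | rfl
             | (exfalso; omega)
             | (congr 1; omega)
             | (congr 1; funext w; simp only [gArgs, Fin.val_mk]; congr 1; omega)))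
  · -- outside block: disjoint terms
    refine Finset.sum_nbij'
      (fun m => (⟨if m.1 < i.1 then m.1 else m.1 - q, by split_ifs <;> omega⟩ : Fin (p + 1)))
      (fun b => (⟨if b.1 < i.1 then b.1 else b.1 + q, by split_ifs <;> omega⟩ : Fin (p + q + 1)))
      (fun m hm => by
        simp only [Finset.mem_filter, Finset.mem_univ, true_and, not_and, not_le] at hm
        simp only [Finset.mem_filter, Finset.mem_univ, true_and, ne_eq, Fin.ext_iff, Fin.val_mk]
        split_ifs <;> omega)
      (fun b hb => by
        simp only [Finset.mem_filter, Finset.mem_univ, true_and, ne_eq, Fin.ext_iff] at hb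
        simp only [Finset.mem_filter, Finset.mem_univ, true_and, Fin.val_mk]
        split_ifs <;> omega)
      (fun m hm => by
        simp only [Finset.mem_filter, Finset.mem_univ, true_and, not_and, not_le] at hm
        apply Fin.ext
        simp only [Fin.val_mk]
        split_ifs <;> omega)
      (fun b hb => by
        simp only [Finset.mem_filter, Finset.mem_univ, true_and, ne_eq, Fin.ext_iff] at hb
        apply Fin.ext
        simp only [Fin.val_mk]
        split_ifs <;> omega)
      (fun m hm => ?_)
    simp only [Finset.mem_filter, Finset.mem_univ, true_and, not_and, not_le] at hm
    unfold Tval Dval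
    congr 1
    funext s
    simp only [insertArgs, Wargs, gArgs, Fin.ext_iff, Fin.val_mk]
    split_ifs <;>
      first
      | rfl
      | (exfalso; omega)
      | (congr 1; omega)
      | (congr 1; funext u; simp only [insertArgs, Wargs, gArgs, Fin.val_mk];
         first
         | (congr 1; omega)
         | (split_ifs <;>
             first
             | rfl
             | (exfalso; omega)
             | (congr 1; omega)
             | (congr 1; funext w; simp only [gArgs, Fin.val_mk]; congr 1; omega)))

end GerstenhaberComp

open GerstenhaberComp in
/-- Let `k` be a commutative ring and `V` a `k`-module.  For multilinear maps
`f ∈ C^{p+1}(V,V)`, `g ∈ C^{q+1}(V,V)`, `h ∈ C^{r+1}(V,V)`, with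
`f ∘ g := Σᵢ f ∘ᵢ g` the (non-associative) circle product, the associator of `∘` is
symmetric in the last two variables: `f∘(g∘h) − (f∘g)∘h = f∘(h∘g) − (f∘h)∘g`
(all four terms reindexed to live in `C^{p+q+r+1}(V,V)`).
Consequently `⊕_{n ≥ 1} C^n(V,V)` equipped with `∘` is a pre-Lie algebra over `k`. -/
theorem multilinear_comp_preLie
    (k V : Type*) [CommRing k] [AddCommGroup V] [Module k V]
    (p q r : ℕ) (f : C k V (p + 1)) (g : C k V (q + 1)) (h : C k V (r + 1)) :
    castC (by omega) (comp f (castC (by omega : q + 1 + r = q + r + 1) (comp g h)))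
        - castC (by omega : p + q + 1 + r = p + q + r + 1)
            (comp (castC (by omega : p + 1 + q = p + q + 1) (comp f g)) h)
      = castC (by omega) (comp f (castC (by omega : r + 1 + q = r + q + 1) (comp h g)))
        - castC (by omega : p + r + 1 + q = p + q + r + 1)
            (comp (castC (by omega : p + 1 + r = p + r + 1) (comp f h)) g) := by
  ext x
  simp only [MultilinearMap.sub_apply]
  set y : ℕ → V := fun n => if hn : n < p + q + r + 1 then x ⟨n, hn⟩ else 0 with hy
  have hxy : x = fun l => y l.1 := by
    funext l
    simp only [hy]
    rw [dif_pos l.2]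
  rw [hxy, LA f g h _ _ y, LB f g h _ _ y, LA f h g _ _ y, LB f h g _ _ y]
  have hS : (∑ i : Fin (p + 1), ∑ b ∈ Finset.univ.filter (fun b : Fin (p + 1) => b ≠ i),
        Dval f g h y i b) =
      ∑ i : Fin (p + 1), ∑ b ∈ Finset.univ.filter (fun b : Fin (p + 1) => b ≠ i),
        Dval f h g y i b := by
    have h1 : (∑ i : Fin (p + 1), ∑ b ∈ Finset.univ.filter (fun b : Fin (p + 1) => b ≠ i),
          Dval f g h y i b) =
        ∑ i : Fin (p + 1), ∑ b ∈ Finset.univ.filter (fun b : Fin (p + 1) => b ≠ i),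
          Dval f h g y b i :=
      Finset.sum_congr rfl fun i _ => Finset.sum_congr rfl fun b hb =>
        Dval_comm f g h y i b (by
          simp only [Finset.mem_filter, Finset.mem_univ, true_and] at hb
          exact hb.symm)
    rw [h1]
    exact Finset.sum_comm' (by
      intro a b
      simp only [Finset.mem_univ, Finset.mem_filter, true_and, and_true]
      exact ne_comm)
  rw [hS]
  abel
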